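/- Let K be a field, let P, Q be polynomials in K[x_1,...,x_n], let R be a commutative local domain with maximal ideal m, and let π_1,...,π_n ∈ R be such that Q(π) ≠ 0 and P(π)/Q(π) ∈ R (i.e. Q(π) divides P(π) in R). Let φ_1,...,φ_n ∈ R satisfy φ_i − π_i ∈ Q(π)·m for all i. Then Q(φ) ≠ 0 and Q(φ) divides P(φ) in R; in fact Q(φ) = Q(π)·u for some u ∈ R with u ≡ 1 mod m (hence u is a unit). -/

import Mathlib

open MvPolynomial

/-- Let `K` be a field, `P, Q ∈ K[x_1,…,x_n]`, `R` a local domain which is a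
`K`-algebra, with maximal ideal `m`, and `π : Fin n → R` with `Q(π) ≠ 0` and
`Q(π) ∣ P(π)`. If `φ : Fin n → R` satisfies `φ i − π i ∈ Q(π)·m` for all `i`,
then `Q(φ) ≠ 0`, `Q(φ) ∣ P(φ)`, and in fact `Q(φ) = Q(π)·u` with `u ≡ 1 mod m`. -/
theorem stmt5 {K R : Type*} [Field K] [CommRing R] [IsDomain R] [IsLocalRing R]
    [Algebra K R] {n : ℕ} (P Q : MvPolynomial (Fin n) K) (π φ : Fin n → R)
    (hQπ : aeval π Q ≠ 0) (hdvd : aeval π Q ∣ aeval π P)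
    (hφ : ∀ i, ∃ x ∈ IsLocalRing.maximalIdeal R, φ i - π i = aeval π Q * x) :
    aeval φ Q ≠ 0 ∧ aeval φ Q ∣ aeval φ P ∧
      ∃ u : R, aeval φ Q = aeval π Q * u ∧ u - 1 ∈ IsLocalRing.maximalIdeal R := by
  set m := IsLocalRing.maximalIdeal R with hm
  set I : Ideal R := Ideal.span {aeval π Q} * m with hI
  have hφI : ∀ i, φ i - π i ∈ I := by
    intro i
    obtain ⟨x, hx, hxe⟩ := hφ i
    exact Ideal.mem_span_singleton_mul.2 ⟨x, hx, hxe.symm⟩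
  -- key congruence
  have key : ∀ F : MvPolynomial (Fin n) K, aeval φ F - aeval π F ∈ I := by
    intro F
    rw [← Ideal.Quotient.eq]
    have h1 : ∀ G : Fin n → R,
        Ideal.Quotient.mk I (aeval G F) =
          aeval (fun i => Ideal.Quotient.mk I (G i)) F := by
      intro G
      exact MvPolynomial.comp_aeval_apply (f := G) (Ideal.Quotient.mkₐ K I) F
    rw [h1, h1]
    have h2 : (fun i => Ideal.Quotient.mk I (φ i)) = fun i => Ideal.Quotient.mk I (π i) := by
      funext i
      rw [Ideal.Quotient.eq]
      exact hφI i
    rw [h2]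
  have hQ := key Q
  rw [Ideal.mem_span_singleton_mul] at hQ
  obtain ⟨z, hz, hze⟩ := hQ
  have hQeq : aeval φ Q = aeval π Q * (1 + z) := by ring_nf; linear_combination -hze
  have hu : IsUnit (1 + z) := by
    have := IsLocalRing.isUnit_one_sub_self_of_mem_nonunits (-z)
      (by simpa [m] using (IsLocalRing.maximalIdeal R).neg_mem hz)
    simpa [sub_neg_eq_add] using this
  have hQφ : aeval φ Q ≠ 0 := by
    rw [hQeq]
    exact mul_ne_zero hQπ hu.ne_zero
  refine ⟨hQφ, ?_, ⟨1 + z, hQeq, by simpa using hz⟩⟩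
  -- divisibility
  have hP := key P
  rw [Ideal.mem_span_singleton_mul] at hP
  obtain ⟨w, hw, hwe⟩ := hP
  obtain ⟨c, hc⟩ := hdvd
  have hPeq : aeval φ P = aeval π Q * (c + w) := by
    rw [mul_add, ← hc, hwe]; ring
  obtain ⟨v, hv⟩ := hu
  refine ⟨↑v⁻¹ * (c + w), ?_⟩
  rw [hPeq, hQeq, ← hv]
  rw [mul_assoc, Units.mul_inv_cancel_left]
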